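/- Define, for x > −1 and y > −1, u(x,y) = −(−y√(1+x) − √(1+y) + x√(1+y) − √(1+x) + (1+y)^{3/2})/√(1+y) and v(x,y) = −(4√(1+y) − 4√(1+x) + y√(1+y) − 4y√(1+x) + x√(1+y))/√(1+y). Then (u,v) satisfies the lightcone wave map system u_{xy} = u_x u_y/(u+v), v_{xy} = v_x v_y/(u+v) at every point (x,y) with x > −1, y > −1 and u(x,y) + v(x,y) ≠ 0; moreover it satisfies the Cauchy data along the diagonal y = x: for every x > −1, u(x,x) = 1 − x, v(x,x) = 2x, and the normal derivatives vanish: (∂u/∂x − ∂u/∂y)(x,x) = 0 and (∂v/∂x − ∂v/∂y)(x,x) = 0. -/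

import Mathlib

/-- Partial derivative with respect to the first variable `x`. -/
noncomputable def pdx (f : ℝ × ℝ → ℝ) (p : ℝ × ℝ) : ℝ :=
  deriv (fun x => f (x, p.2)) p.1

/-- Partial derivative with respect to the second variable `y`. -/
noncomputable def pdy (f : ℝ × ℝ → ℝ) (p : ℝ × ℝ) : ℝ :=
  deriv (fun y => f (p.1, y)) p.2

/-- The explicit solution `u` of Example 4.1. -/
noncomputable def uEx : ℝ × ℝ → ℝ := fun p =>
  -((-p.2 * Real.sqrt (1 + p.1) - Real.sqrt (1 + p.2) + p.1 * Real.sqrt (1 + p.2)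
      - Real.sqrt (1 + p.1) + (1 + p.2) ^ ((3 : ℝ) / 2)) / Real.sqrt (1 + p.2))

/-- The explicit solution `v` of Example 4.1. -/
noncomputable def vEx : ℝ × ℝ → ℝ := fun p =>
  -((4 * Real.sqrt (1 + p.2) - 4 * Real.sqrt (1 + p.1) + p.2 * Real.sqrt (1 + p.2)
      - 4 * p.2 * Real.sqrt (1 + p.1) + p.1 * Real.sqrt (1 + p.2)) / Real.sqrt (1 + p.2))

lemma sqrt1_hasDerivAt {x : ℝ} (hx : (1:ℝ)+x ≠ 0) :
    HasDerivAt (fun t => Real.sqrt (1+t)) (1/(2*Real.sqrt (1+x))) x := by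
  have h := (Real.hasDerivAt_sqrt hx).comp x ((hasDerivAt_id x).const_add 1)
  simpa [Function.comp_def] using h

lemma uEx_eq {p : ℝ × ℝ} (hy : -1 < p.2) :
    uEx p = Real.sqrt (1+p.1) * Real.sqrt (1+p.2) - p.1 - p.2 := by
  have h0 : (0:ℝ) < 1 + p.2 := by linarith
  have ht : Real.sqrt (1+p.2) ≠ 0 := ne_of_gt (Real.sqrt_pos.2 h0)
  have ht2 : Real.sqrt (1+p.2) * Real.sqrt (1+p.2) = 1 + p.2 := Real.mul_self_sqrt h0.le
  have h32 : (1+p.2:ℝ) ^ ((3:ℝ)/2) = (1+p.2) * Real.sqrt (1+p.2) := by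
    rw [show ((3:ℝ)/2) = 1 + 1/2 by norm_num, Real.rpow_add h0, Real.rpow_one,
      ← Real.sqrt_eq_rpow]
  simp only [uEx, h32]
  field_simp
  linear_combination (-Real.sqrt (1+p.1)) * ht2

lemma vEx_eq {p : ℝ × ℝ} (hy : -1 < p.2) :
    vEx p = 4 * (Real.sqrt (1+p.1) * Real.sqrt (1+p.2)) - 4 - p.1 - p.2 := by
  have h0 : (0:ℝ) < 1 + p.2 := by linarith
  have ht : Real.sqrt (1+p.2) ≠ 0 := ne_of_gt (Real.sqrt_pos.2 h0)
  have ht2 : Real.sqrt (1+p.2) * Real.sqrt (1+p.2) = 1 + p.2 := Real.mul_self_sqrt h0.le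
  simp only [vEx]
  field_simp
  linear_combination (-4*Real.sqrt (1+p.1)) * ht2

lemma pdx_uEx {p : ℝ × ℝ} (hx : -1 < p.1) (hy : -1 < p.2) :
    pdx uEx p = Real.sqrt (1+p.2) / (2*Real.sqrt (1+p.1)) - 1 := by
  have hfun : (fun x => uEx (x, p.2)) =
      fun x => Real.sqrt (1+x) * Real.sqrt (1+p.2) - x - p.2 :=
    funext fun x => uEx_eq (p := (x, p.2)) hy
  have h1 : HasDerivAt (fun t => Real.sqrt (1+t)) (1/(2*Real.sqrt (1+p.1))) p.1 :=
    sqrt1_hasDerivAt (by linarith)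
  have h : HasDerivAt (fun x => Real.sqrt (1+x) * Real.sqrt (1+p.2) - x - p.2)
      (1/(2*Real.sqrt (1+p.1)) * Real.sqrt (1+p.2) - 1) p.1 :=
    ((h1.mul_const (Real.sqrt (1+p.2))).sub (hasDerivAt_id' p.1)).sub_const p.2
  rw [pdx, hfun, h.deriv]; ring

lemma pdx_vEx {p : ℝ × ℝ} (hx : -1 < p.1) (hy : -1 < p.2) :
    pdx vEx p = 2 * Real.sqrt (1+p.2) / Real.sqrt (1+p.1) - 1 := by
  have hfun : (fun x => vEx (x, p.2)) =
      fun x => 4 * (Real.sqrt (1+x) * Real.sqrt (1+p.2)) - 4 - x - p.2 :=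
    funext fun x => vEx_eq (p := (x, p.2)) hy
  have h1 : HasDerivAt (fun t => Real.sqrt (1+t)) (1/(2*Real.sqrt (1+p.1))) p.1 :=
    sqrt1_hasDerivAt (by linarith)
  have h : HasDerivAt (fun x => 4 * (Real.sqrt (1+x) * Real.sqrt (1+p.2)) - 4 - x - p.2)
      (4 * (1/(2*Real.sqrt (1+p.1)) * Real.sqrt (1+p.2)) - 1) p.1 :=
    ((((h1.mul_const (Real.sqrt (1+p.2))).const_mul 4).sub_const 4).sub
      (hasDerivAt_id' p.1)).sub_const p.2
  rw [pdx, hfun, h.deriv]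
  have hs : Real.sqrt (1+p.1) ≠ 0 := ne_of_gt (Real.sqrt_pos.2 (by linarith))
  field_simp; ring

lemma pdy_uEx {p : ℝ × ℝ} (hy : -1 < p.2) :
    pdy uEx p = Real.sqrt (1+p.1) / (2*Real.sqrt (1+p.2)) - 1 := by
  have hev : (fun y => uEx (p.1, y)) =ᶠ[nhds p.2]
      fun y => Real.sqrt (1+p.1) * Real.sqrt (1+y) - p.1 - y := by
    filter_upwards [Ioi_mem_nhds hy] with y hy'
    exact uEx_eq (p := (p.1, y)) hy'
  have h1 : HasDerivAt (fun t => Real.sqrt (1+t)) (1/(2*Real.sqrt (1+p.2))) p.2 :=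
    sqrt1_hasDerivAt (by linarith)
  have h : HasDerivAt (fun y => Real.sqrt (1+p.1) * Real.sqrt (1+y) - p.1 - y)
      (Real.sqrt (1+p.1) * (1/(2*Real.sqrt (1+p.2))) - 1) p.2 :=
    ((h1.const_mul (Real.sqrt (1+p.1))).sub_const p.1).sub (hasDerivAt_id' p.2)
  rw [pdy, hev.deriv_eq, h.deriv]; ring

lemma pdy_vEx {p : ℝ × ℝ} (hy : -1 < p.2) :
    pdy vEx p = 2 * Real.sqrt (1+p.1) / Real.sqrt (1+p.2) - 1 := by
  have hev : (fun y => vEx (p.1, y)) =ᶠ[nhds p.2]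
      fun y => 4 * (Real.sqrt (1+p.1) * Real.sqrt (1+y)) - 4 - p.1 - y := by
    filter_upwards [Ioi_mem_nhds hy] with y hy'
    exact vEx_eq (p := (p.1, y)) hy'
  have h1 : HasDerivAt (fun t => Real.sqrt (1+t)) (1/(2*Real.sqrt (1+p.2))) p.2 :=
    sqrt1_hasDerivAt (by linarith)
  have h : HasDerivAt (fun y => 4 * (Real.sqrt (1+p.1) * Real.sqrt (1+y)) - 4 - p.1 - y)
      (4 * (Real.sqrt (1+p.1) * (1/(2*Real.sqrt (1+p.2)))) - 1) p.2 :=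
    ((((h1.const_mul (Real.sqrt (1+p.1))).const_mul 4).sub_const 4).sub_const
      p.1).sub (hasDerivAt_id' p.2)
  rw [pdy, hev.deriv_eq, h.deriv]
  have ht : Real.sqrt (1+p.2) ≠ 0 := ne_of_gt (Real.sqrt_pos.2 (by linarith))
  field_simp; ring

lemma pdx_pdy_uEx {p : ℝ × ℝ} (hx : -1 < p.1) (hy : -1 < p.2) :
    pdx (pdy uEx) p = 1 / (4 * Real.sqrt (1+p.1) * Real.sqrt (1+p.2)) := by
  have hfun : (fun x => pdy uEx (x, p.2)) =
      fun x => Real.sqrt (1+x) * (1/(2*Real.sqrt (1+p.2))) - 1 := by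
    funext x
    rw [pdy_uEx (p := (x, p.2)) hy]; ring
  have h1 : HasDerivAt (fun t => Real.sqrt (1+t)) (1/(2*Real.sqrt (1+p.1))) p.1 :=
    sqrt1_hasDerivAt (by linarith)
  have h : HasDerivAt (fun x => Real.sqrt (1+x) * (1/(2*Real.sqrt (1+p.2))) - 1)
      (1/(2*Real.sqrt (1+p.1)) * (1/(2*Real.sqrt (1+p.2)))) p.1 :=
    (h1.mul_const (1/(2*Real.sqrt (1+p.2)))).sub_const 1
  rw [pdx, hfun, h.deriv]; ring

lemma pdx_pdy_vEx {p : ℝ × ℝ} (hx : -1 < p.1) (hy : -1 < p.2) :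
    pdx (pdy vEx) p = 1 / (Real.sqrt (1+p.1) * Real.sqrt (1+p.2)) := by
  have hfun : (fun x => pdy vEx (x, p.2)) =
      fun x => Real.sqrt (1+x) * (2/Real.sqrt (1+p.2)) - 1 := by
    funext x
    rw [pdy_vEx (p := (x, p.2)) hy]; ring
  have h1 : HasDerivAt (fun t => Real.sqrt (1+t)) (1/(2*Real.sqrt (1+p.1))) p.1 :=
    sqrt1_hasDerivAt (by linarith)
  have h : HasDerivAt (fun x => Real.sqrt (1+x) * (2/Real.sqrt (1+p.2)) - 1)
      (1/(2*Real.sqrt (1+p.1)) * (2/Real.sqrt (1+p.2))) p.1 :=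
    (h1.mul_const (2/Real.sqrt (1+p.2))).sub_const 1
  rw [pdx, hfun, h.deriv]
  have hs : Real.sqrt (1+p.1) ≠ 0 := ne_of_gt (Real.sqrt_pos.2 (by linarith))
  have ht : Real.sqrt (1+p.2) ≠ 0 := ne_of_gt (Real.sqrt_pos.2 (by linarith))
  field_simp


/-- the explicit pair `(uEx, vEx)` solves the lightcone wave map system
for `x, y > −1` wherever `u + v ≠ 0`, and satisfies the Cauchy data of Example 4.1
along the diagonal `y = x`: `u = 1 − x`, `v = 2x`, with vanishing normal derivatives. -/
theorem example41_solution :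
    (∀ p : ℝ × ℝ, -1 < p.1 → -1 < p.2 → uEx p + vEx p ≠ 0 →
      pdx (pdy uEx) p = pdx uEx p * pdy uEx p / (uEx p + vEx p) ∧
      pdx (pdy vEx) p = pdx vEx p * pdy vEx p / (uEx p + vEx p)) ∧
    (∀ x : ℝ, -1 < x →
      uEx (x, x) = 1 - x ∧ vEx (x, x) = 2 * x ∧
      pdx uEx (x, x) - pdy uEx (x, x) = 0 ∧
      pdx vEx (x, x) - pdy vEx (x, x) = 0) := by
  constructor
  · intro p hx hy huv
    set s := Real.sqrt (1+p.1) with hs_def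
    set t := Real.sqrt (1+p.2) with ht_def
    have hs0 : 0 < s := Real.sqrt_pos.2 (by linarith)
    have ht0 : 0 < t := Real.sqrt_pos.2 (by linarith)
    have hs2 : s * s = 1 + p.1 := Real.mul_self_sqrt (by linarith)
    have ht2 : t * t = 1 + p.2 := Real.mul_self_sqrt (by linarith)
    have huv_eq : uEx p + vEx p = 5 * (s * t) - 2 * (s * s) - 2 * (t * t) := by
      rw [uEx_eq hy, vEx_eq hy, hs2, ht2]; ring
    rw [pdx_pdy_uEx hx hy, pdx_pdy_vEx hx hy, pdx_uEx hx hy, pdy_uEx hy,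
      pdx_vEx hx hy, pdy_vEx hy, huv_eq]
    rw [huv_eq] at huv
    rw [← hs_def, ← ht_def]
    constructor <;> (rw [eq_div_iff huv]; field_simp; ring)
  · intro x hx
    have hs0 : 0 < Real.sqrt (1+x) := Real.sqrt_pos.2 (by linarith)
    have hs2 : Real.sqrt (1+x) * Real.sqrt (1+x) = 1 + x := Real.mul_self_sqrt (by linarith)
    refine ⟨?_, ?_, ?_, ?_⟩
    · rw [uEx_eq (p := (x, x)) hx]; simp only; rw [hs2]; ring
    · rw [vEx_eq (p := (x, x)) hx]; simp only; rw [hs2]; ring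
    · rw [pdx_uEx (p := (x, x)) hx hx, pdy_uEx (p := (x, x)) hx]
      simp only []
      ring
    · rw [pdx_vEx (p := (x, x)) hx hx, pdy_vEx (p := (x, x)) hx]
      simp only []
      ring
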